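/- Let G and H be groups, ν : G → H a group homomorphism, and s ⊆ H × G a relation such that: (i) whenever (f,g) ∈ s we have ν(g) = f; (ii) for every f ∈ H there exists g ∈ G with (f,g) ∈ s; (iii) if (f₁,g₁) ∈ s and (f₂,g₂) ∈ s then (f₁f₂, g₁g₂) ∈ s; and (iv) any two elements of s⁻ := {g ∈ G : (1,g) ∈ s} commute with each other. Suppose g₁,…,g_k ∈ G satisfy (ν(g_i), g_i) ∈ s for each i, and ε₁,…,ε_k ∈ {1,−1} are such that ν(g₁)^{ε₁}⋯ν(g_k)^{ε_k} = 1 in H. Then g₁^{ε₁}⋯g_k^{ε_k} lies in the subgroup of G generated by s⁻. -/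

import Mathlib

/-- Let `ν : G → H` be a group homomorphism and `s ⊆ H × G` a relation such that
(i) `(f,g) ∈ s → ν g = f`, (ii) every `f ∈ H` has some `g` with `(f,g) ∈ s`,
(iii) `s` is closed under products, and (iv) the set `s⁻ = {g | (1,g) ∈ s}` is
commutative.  If `g₁,…,g_k ∈ G` satisfy `(ν gᵢ, gᵢ) ∈ s` for each `i`, and
`ε₁,…,ε_k ∈ {1,−1}` are such that `ν(g₁)^{ε₁}⋯ν(g_k)^{ε_k} = 1` in `H`, then
`g₁^{ε₁}⋯g_k^{ε_k}` lies in the subgroup generated by `s⁻`. -/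
theorem word_mem_closure_of_rel {G H : Type*} [Group G] [Group H]
    (ν : G →* H) (s : Set (H × G))
    (h1 : ∀ f g, (f, g) ∈ s → ν g = f)
    (h2 : ∀ f : H, ∃ g : G, (f, g) ∈ s)
    (h3 : ∀ f₁ g₁ f₂ g₂, (f₁, g₁) ∈ s → (f₂, g₂) ∈ s → (f₁ * f₂, g₁ * g₂) ∈ s)
    (h4 : ∀ g₁ g₂ : G, (1, g₁) ∈ s → (1, g₂) ∈ s → g₁ * g₂ = g₂ * g₁)
    (l : List (G × ℤ))
    (hmem : ∀ p ∈ l, (ν p.1, p.1) ∈ s)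
    (hexp : ∀ p ∈ l, p.2 = 1 ∨ p.2 = -1)
    (hprod : (l.map fun p => ν p.1 ^ p.2).prod = 1) :
    (l.map fun p => p.1 ^ p.2).prod ∈ Subgroup.closure {g : G | (1, g) ∈ s} := by
  set S : Set G := {g : G | (1, g) ∈ s} with hS
  set N := Subgroup.closure S with hNdef
  have gen1 : ∀ x n : G, (ν x, x) ∈ s → n ∈ S → x * n * x⁻¹ ∈ N := by
    intro x n hx hn
    obtain ⟨y, hy⟩ := h2 (ν x)⁻¹
    have h5 : ((1 : H), x * (n * y)) ∈ s := by
      have := h3 _ _ _ _ hx (h3 _ _ _ _ hn hy)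
      simpa using this
    have h6 : ((1 : H), x * y) ∈ s := by
      have := h3 _ _ _ _ hx hy
      simpa using this
    have heq : x * n * x⁻¹ = (x * (n * y)) * (x * y)⁻¹ := by group
    rw [heq]
    exact mul_mem (Subgroup.subset_closure h5) (inv_mem (Subgroup.subset_closure h6))
  have gen2 : ∀ x n : G, (ν x, x) ∈ s → n ∈ S → x⁻¹ * n * x ∈ N := by
    intro x n hx hn
    obtain ⟨y, hy⟩ := h2 (ν x)⁻¹
    have h5 : ((1 : H), y * (n * x)) ∈ s := by
      have := h3 _ _ _ _ hy (h3 _ _ _ _ hn hx)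
      simpa using this
    have h6 : ((1 : H), y * x) ∈ s := by
      have := h3 _ _ _ _ hy hx
      simpa using this
    have heq : x⁻¹ * n * x = (y * x)⁻¹ * (y * (n * x)) := by group
    rw [heq]
    exact mul_mem (inv_mem (Subgroup.subset_closure h6)) (Subgroup.subset_closure h5)
  have conj1 : ∀ x : G, (ν x, x) ∈ s → ∀ n ∈ N, x * n * x⁻¹ ∈ N := by
    intro x hx n hn
    induction hn using Subgroup.closure_induction with
    | mem g hg => exact gen1 x g hx hg
    | one => simpa using one_mem N
    | mul a b _ _ ha hb =>
        have : x * (a * b) * x⁻¹ = (x * a * x⁻¹) * (x * b * x⁻¹) := by group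
        rw [this]; exact mul_mem ha hb
    | inv a _ ha =>
        have : x * a⁻¹ * x⁻¹ = (x * a * x⁻¹)⁻¹ := by group
        rw [this]; exact inv_mem ha
  have conj2 : ∀ x : G, (ν x, x) ∈ s → ∀ n ∈ N, x⁻¹ * n * x ∈ N := by
    intro x hx n hn
    induction hn using Subgroup.closure_induction with
    | mem g hg => exact gen2 x g hx hg
    | one => simpa using one_mem N
    | mul a b _ _ ha hb =>
        have : x⁻¹ * (a * b) * x = (x⁻¹ * a * x) * (x⁻¹ * b * x) := by group
        rw [this]; exact mul_mem ha hb
    | inv a _ ha =>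
        have : x⁻¹ * a⁻¹ * x = (x⁻¹ * a * x)⁻¹ := by group
        rw [this]; exact inv_mem ha
  have main : ∀ L : List (G × ℤ), (∀ p ∈ L, (ν p.1, p.1) ∈ s) →
      (∀ p ∈ L, p.2 = 1 ∨ p.2 = -1) →
      ∃ n ∈ N, ∃ t : G, ((L.map fun p => ν p.1 ^ p.2).prod, t) ∈ s ∧
        (L.map fun p => p.1 ^ p.2).prod = n * t := by
    intro L
    induction L with
    | nil =>
        intro _ _
        obtain ⟨g, hg⟩ := h2 1
        refine ⟨g⁻¹, inv_mem (Subgroup.subset_closure hg), g, by simpa using hg, by simp⟩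
    | cons p L ih =>
        intro hm he
        obtain ⟨n, hn, t, ht, heq⟩ := ih (fun q hq => hm q (List.mem_cons_of_mem _ hq))
          (fun q hq => he q (List.mem_cons_of_mem _ hq))
        obtain ⟨x, e⟩ := p
        have hx : (ν x, x) ∈ s := hm _ List.mem_cons_self
        rcases he _ List.mem_cons_self with h | h <;> simp only at h <;> subst h
        · refine ⟨x * n * x⁻¹, conj1 x hx n hn, x * t, ?_, ?_⟩
          · simpa [zpow_one] using h3 _ _ _ _ hx ht
          · simp only [List.map_cons, List.prod_cons, zpow_one, heq]; group
        · obtain ⟨y, hy⟩ := h2 (ν x)⁻¹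
          have hyx : ((1 : H), y * x) ∈ s := by
            have := h3 _ _ _ _ hy hx
            simpa using this
          refine ⟨(x⁻¹ * n * x) * (y * x)⁻¹,
            mul_mem (conj2 x hx n hn) (inv_mem (Subgroup.subset_closure hyx)),
            y * t, ?_, ?_⟩
          · have := h3 _ _ _ _ hy ht
            simpa [zpow_neg, zpow_one] using this
          · simp only [List.map_cons, List.prod_cons, zpow_neg, zpow_one, heq]; group
  obtain ⟨n, hn, t, ht, heq⟩ := main l hmem hexp
  rw [hprod] at ht
  rw [heq]
  exact mul_mem hn (Subgroup.subset_closure ht)
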